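/- The function A(s) = s·(ω_q(s)/((q−1)(ω_q(s)−1)) + ω_q(s)^q/s) is strictly increasing on the interval (0,1). -/

import Mathlib

noncomputable section

open Real Set

/-- `H r z = r·z^(r-1) - (r-1)·z^r`. -/
def H (r z : ℝ) : ℝ := r * z ^ (r - 1) - (r - 1) * z ^ r

/-- `ω` is the inverse of `H r`, mapping `(0,1]` into `[1, r/(r-1))`,
    so that `H r (ω s) = s` for `s ∈ (0,1]`. -/
def IsOmega (r : ℝ) (ω : ℝ → ℝ) : Prop :=
  ∀ s ∈ Set.Ioc (0 : ℝ) 1, ω s ∈ Set.Ico (1 : ℝ) (r / (r - 1)) ∧ H r (ω s) = s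

/-- `τ(s₁,s₂,t) = ((p-q)/p)·(t^p - s₁)/(t^(p-q) - s₁/s₂)`. -/
def tau (p q s₁ s₂ t : ℝ) : ℝ :=
  ((p - q) / p) * ((t ^ p - s₁) / (t ^ (p - q) - s₁ / s₂))

/-- `F(τ)` from the paper, where `ω` plays the role of `ω_q`. -/
def Ffun (p q : ℝ) (ω : ℝ → ℝ) (τ : ℝ) : ℝ :=
  (τ / (1 - ω τ)) * (p - (q * (p - 1) / (q - 1)) * ω τ)
    - q * (p * ω τ ^ (q - 1) - (p - 1) * ω τ ^ q)

/-- `A(s)` from the paper, where `ω` plays the role of `ω_q`. -/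
def Afun (q : ℝ) (ω : ℝ → ℝ) (s : ℝ) : ℝ :=
  s * (ω s / ((q - 1) * (ω s - 1)) + ω s ^ q / s)


-- Auxiliary: derivative of H
lemma H_hasDeriv (q : ℝ) {z : ℝ} (hz : 0 < z) :
    HasDerivAt (H q) (q * ((q-1) * z ^ (q-1-1)) - (q-1) * (q * z ^ (q-1))) z := by
  have h1 : HasDerivAt (fun x : ℝ => x ^ (q-1)) ((q-1) * z ^ (q-1-1)) z :=
    Real.hasDerivAt_rpow_const (Or.inl hz.ne')
  have h2 : HasDerivAt (fun x : ℝ => x ^ q) (q * z ^ (q-1)) z :=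
    Real.hasDerivAt_rpow_const (Or.inl hz.ne')
  exact (h1.const_mul q).sub (h2.const_mul (q-1))

lemma H_anti {q : ℝ} (hq : 1 < q) : StrictAntiOn (H q) (Set.Ici 1) := by
  apply strictAntiOn_of_deriv_neg (convex_Ici 1)
  · intro z hz
    exact ((H_hasDeriv q (lt_of_lt_of_le one_pos hz)).continuousAt).continuousWithinAt
  · intro z hz
    rw [interior_Ici] at hz
    have hz1 : (1:ℝ) < z := hz
    have hz0 : (0:ℝ) < z := lt_trans one_pos hz1
    rw [(H_hasDeriv q hz0).deriv]
    have : z ^ (q-1-1) < z ^ (q-1) := by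
      apply Real.rpow_lt_rpow_of_exponent_lt hz1; linarith
    have hp : 0 < q * (q-1) * (z ^ (q-1) - z ^ (q-1-1)) :=
      mul_pos (mul_pos (by linarith) (by linarith)) (by linarith)
    nlinarith [hp]

def gfun (q w : ℝ) : ℝ := w ^ q / ((q - 1) * (w - 1))

lemma g_hasDeriv {q w : ℝ} (hq : 1 < q) (hw : 1 < w) :
    HasDerivAt (gfun q)
      ((q * w ^ (q-1) * ((q-1)*(w-1)) - w ^ q * (q-1)) / ((q-1)*(w-1))^2) w := by
  have hw0 : (0:ℝ) < w := lt_trans one_pos hw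
  have h1 : HasDerivAt (fun x : ℝ => x ^ q) (q * w ^ (q-1)) w :=
    Real.hasDerivAt_rpow_const (Or.inl hw0.ne')
  have h2 : HasDerivAt (fun x : ℝ => (q-1)*(x-1)) (q-1) w := by
    simpa using ((hasDerivAt_id w).sub_const 1).const_mul (q-1)
  have hd : (q-1)*(w-1) ≠ 0 :=
    ne_of_gt (mul_pos (by linarith) (by linarith))
  exact h1.div h2 hd

lemma g_anti {q : ℝ} (hq : 1 < q) : StrictAntiOn (gfun q) (Set.Ioo 1 (q/(q-1))) := by
  apply strictAntiOn_of_deriv_neg (convex_Ioo _ _)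
  · intro w hw
    exact (g_hasDeriv hq hw.1).continuousAt.continuousWithinAt
  · intro w hw
    rw [interior_Ioo] at hw
    obtain ⟨hw1, hw2⟩ := hw
    have hw0 : (0:ℝ) < w := lt_trans one_pos hw1
    rw [(g_hasDeriv hq hw1).deriv]
    apply div_neg_of_neg_of_pos
    · have hwq : w ^ q = w ^ (q-1) * w := by
        have := Real.rpow_add_one hw0.ne' (q-1)
        rwa [show q-1+1 = q by ring] at this
      rw [hwq]
      have hlt : (q-1)*w < q := by
        rw [lt_div_iff₀ (by linarith)] at hw2
        nlinarith
      have hp : 0 < (q-1) * w ^ (q-1) * (q - (q-1)*w) :=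
        mul_pos (mul_pos (by linarith) (Real.rpow_pos_of_pos hw0 _)) (by linarith)
      nlinarith [hp]
    · exact pow_pos (mul_pos (by linarith) (by linarith)) 2

lemma omega_gt_one {q s w : ℝ} (hw : 1 ≤ w) (hH : H q w = s) (hs : s < 1) : 1 < w := by
  rcases lt_or_eq_of_le hw with h | h
  · exact h
  · exfalso
    rw [← h] at hH
    simp [H, Real.one_rpow] at hH
    linarith

lemma Afun_eq {q : ℝ} (hq : 1 < q) (ωq : ℝ → ℝ) {s : ℝ} (hs0 : 0 < s)
    (hw1 : 1 < ωq s) (hH : H q (ωq s) = s) : Afun q ωq s = gfun q (ωq s) := by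
  set w := ωq s with hwdef
  have hw0 : (0:ℝ) < w := lt_trans one_pos hw1
  have hwq : w ^ q = w ^ (q-1) * w := by
    have := Real.rpow_add_one hw0.ne' (q-1)
    rwa [show q-1+1 = q by ring] at this
  have hs : s = q * w ^ (q-1) - (q-1) * w ^ q := by rw [← hH]; rfl
  have hd : (q-1)*(w-1) ≠ 0 := ne_of_gt (mul_pos (by linarith) (by linarith))
  have key : s * w = w ^ q * (q - (q-1)*w) := by rw [hs, hwq]; ring
  unfold Afun gfun
  rw [← hwdef, mul_add]
  have h2 : s * (w ^ q / s) = w ^ q := by field_simp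
  rw [h2, ← mul_div_assoc, key, div_add' _ _ _ hd]
  congr 1
  ring

/-- `A` is strictly increasing on `(0,1)`. -/
theorem stmt_3 (p q : ℝ) (hq : 1 < q) (hqp : q < p)
    (ωq : ℝ → ℝ) (hωq : IsOmega q ωq) :
    StrictMonoOn (Afun q ωq) (Set.Ioo (0 : ℝ) 1) := by
  intro s1 hs1 s2 hs2 h12
  obtain ⟨hm1, hH1⟩ := hωq s1 ⟨hs1.1, hs1.2.le⟩
  obtain ⟨hm2, hH2⟩ := hωq s2 ⟨hs2.1, hs2.2.le⟩
  have hw1 : 1 < ωq s1 := omega_gt_one hm1.1 hH1 hs1.2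
  have hw2 : 1 < ωq s2 := omega_gt_one hm2.1 hH2 hs2.2
  have hlt : ωq s2 < ωq s1 := by
    apply ((H_anti hq).lt_iff_gt (hm1.1 : ωq s1 ∈ Set.Ici 1) (hm2.1 : ωq s2 ∈ Set.Ici 1)).mp
    rw [hH1, hH2]; exact h12
  rw [Afun_eq hq ωq hs1.1 hw1 hH1, Afun_eq hq ωq hs2.1 hw2 hH2]
  exact g_anti hq ⟨hw2, hm2.2⟩ ⟨hw1, hm1.2⟩ hlt
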